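/- Let a > 1, s ∈ ℝ, and set β = s/(2(a−1)). The function h(y) = e^{s y}·(cos²y)^{a−1} on (−π/2, π/2) attains its maximum at y* = arctan(β), and h(y*) = ( e^{2β·arctan(β)} / (1 + β²) )^{a−1}, i.e., h(y) ≤ h(y*) for all y ∈ (−π/2, π/2). -/

import Mathlib

open Real Set

lemma stmt8_aux (β : ℝ) :
    ∀ t : ℝ, HasDerivAt (fun t => Real.exp (β * t) * Real.cos t)
      (Real.exp (β * t) * (β * Real.cos t - Real.sin t)) t := by
  intro t
  have h1 : HasDerivAt (fun t : ℝ => β * t) β t := by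
    simpa using (hasDerivAt_id t).const_mul β
  have h2 : HasDerivAt (fun t : ℝ => Real.exp (β * t)) (Real.exp (β * t) * β) t :=
    (Real.hasDerivAt_exp (β * t)).comp t h1
  have h3 := Real.hasDerivAt_cos t
  have : HasDerivAt (fun t => Real.exp (β * t) * Real.cos t)
      (Real.exp (β * t) * β * Real.cos t + Real.exp (β * t) * -Real.sin t) t := h2.mul h3
  convert this using 1
  ring

lemma stmt8_key (β : ℝ) : ∀ y ∈ Ioo (-(π / 2)) (π / 2),
    Real.exp (β * y) * Real.cos y ≤
      Real.exp (β * Real.arctan β) * Real.cos (Real.arctan β) := by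
  intro y hy
  set g : ℝ → ℝ := fun t => Real.exp (β * t) * Real.cos t with hg
  set y₀ := Real.arctan β with hy₀
  have hy₀mem : y₀ ∈ Ioo (-(π / 2)) (π / 2) :=
    ⟨Real.neg_pi_div_two_lt_arctan β, Real.arctan_lt_pi_div_two β⟩
  have hderiv : ∀ t, deriv g t = Real.exp (β * t) * (β * Real.cos t - Real.sin t) :=
    fun t => (stmt8_aux β t).deriv
  have hcont : Continuous g := by
    fun_prop
  have hdiff : Differentiable ℝ g := fun t => (stmt8_aux β t).differentiableAt
  rcases le_total y y₀ with hle | hle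
  · -- monotone on [y, y₀]
    have hmono : MonotoneOn g (Icc y y₀) := by
      apply monotoneOn_of_deriv_nonneg (convex_Icc y y₀) hcont.continuousOn
        (hdiff.differentiableOn)
      intro t ht
      rw [interior_Icc] at ht
      have ht' : t ∈ Ioo (-(π / 2)) (π / 2) :=
        ⟨lt_trans hy.1 ht.1, lt_trans ht.2 hy₀mem.2⟩
      have hcost : 0 < Real.cos t := Real.cos_pos_of_mem_Ioo ht'
      have htan : Real.tan t < β := by
        have := Real.strictMonoOn_tan ht' hy₀mem ht.2
        rwa [Real.tan_arctan] at this
      have hsin : Real.sin t ≤ β * Real.cos t := by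
        have := Real.tan_eq_sin_div_cos t
        rw [this, div_lt_iff₀ hcost] at htan
        linarith
      rw [hderiv]
      have := Real.exp_pos (β * t)
      nlinarith
    exact hmono ⟨le_refl y, hle⟩ ⟨hle, le_refl y₀⟩ hle
  · -- antitone on [y₀, y]
    have hmono : AntitoneOn g (Icc y₀ y) := by
      apply antitoneOn_of_deriv_nonpos (convex_Icc y₀ y) hcont.continuousOn
        (hdiff.differentiableOn)
      intro t ht
      rw [interior_Icc] at ht
      have ht' : t ∈ Ioo (-(π / 2)) (π / 2) :=
        ⟨lt_trans hy₀mem.1 ht.1, lt_trans ht.2 hy.2⟩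
      have hcost : 0 < Real.cos t := Real.cos_pos_of_mem_Ioo ht'
      have htan : β < Real.tan t := by
        have := Real.strictMonoOn_tan hy₀mem ht' ht.1
        rwa [Real.tan_arctan] at this
      have hsin : β * Real.cos t ≤ Real.sin t := by
        have := Real.tan_eq_sin_div_cos t
        rw [this, lt_div_iff₀ hcost] at htan
        linarith
      rw [hderiv]
      have := Real.exp_pos (β * t)
      nlinarith
    exact hmono ⟨le_refl y₀, hle⟩ ⟨hle, le_refl y⟩ hle

/-- for `a > 1`, `s ∈ ℝ`, `β = s/(2(a−1))`, the function
`h(y) = e^{sy}·(cos² y)^{a−1}` on `(−π/2, π/2)` attains its maximum at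
`y* = arctan β`, with `h(y*) = (e^{2β·arctan β}/(1+β²))^{a−1}`. -/
theorem stmt8 (a s β : ℝ) (ha : 1 < a) (hβ : β = s / (2 * (a - 1)))
    (h : ℝ → ℝ)
    (hh : ∀ y : ℝ, h y = Real.exp (s * y) * (Real.cos y ^ 2) ^ (a - 1)) :
    h (Real.arctan β) = (Real.exp (2 * β * Real.arctan β) / (1 + β ^ 2)) ^ (a - 1) ∧
    ∀ y ∈ Ioo (-(π / 2)) (π / 2), h y ≤ h (Real.arctan β) := by
  have ha' : (0 : ℝ) < a - 1 := by linarith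
  have hs : s = 2 * (a - 1) * β := by
    rw [hβ]; field_simp
  -- rewrite h y as ((exp (β y) * cos y)^2)^(a-1)
  have hrw : ∀ y : ℝ, h y = ((Real.exp (β * y) * Real.cos y) ^ 2) ^ (a - 1) := by
    intro y
    rw [hh y]
    have h1 : Real.exp (s * y) = (Real.exp (2 * β * y)) ^ (a - 1) := by
      rw [← Real.exp_mul]
      congr 1
      rw [hs]; ring
    rw [h1, ← Real.mul_rpow (Real.exp_pos _).le (sq_nonneg _)]
    congr 1
    rw [mul_pow, ← Real.exp_nat_mul]
    ring_nf
  have hβpos : (0 : ℝ) < 1 + β ^ 2 := by positivity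
  constructor
  · rw [hrw]
    have hcos : Real.cos (Real.arctan β) ^ 2 = 1 / (1 + β ^ 2) := by
      rw [Real.cos_arctan]
      rw [div_pow, one_pow, sq_sqrt hβpos.le]
    have : (Real.exp (β * Real.arctan β) * Real.cos (Real.arctan β)) ^ 2
        = Real.exp (2 * β * Real.arctan β) / (1 + β ^ 2) := by
      rw [mul_pow, hcos, ← Real.exp_nat_mul]
      ring_nf
    rw [this]
  · intro y hy
    rw [hrw, hrw]
    apply Real.rpow_le_rpow (sq_nonneg _) _ ha'.le
    have hkey := stmt8_key β y hy
    have hpos : 0 ≤ Real.exp (β * y) * Real.cos y := by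
      have : 0 < Real.cos y := Real.cos_pos_of_mem_Ioo hy
      positivity
    exact pow_le_pow_left₀ hpos hkey 2
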